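/- Let ζ = e^{iπ/3} ∈ ℂ. For a finite integer list a = (a₁, …, a_m), define E(a) = Σ_{j=0}^{m} ζ^{c_j} where c_j = a₁ + ⋯ + a_j (c₀ = 0). With the Peano-Gosper sequences Tₙ defined by T₁ = (1, 2, −1, −2, 0, −1) and T_{n+1} = Tₙ ++ [1] ++ T̄ₙ ++ [1] ++ T̄ₙ ++ [−1] ++ Tₙ ++ [−1] ++ Tₙ ++ [1] ++ Tₙ ++ [−1] ++ T̄ₙ, we have E(Tₙ) = (2 + ζ)ⁿ for all n ≥ 1; in particular |E(Tₙ)| = (√7)ⁿ. -/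

import Mathlib

/-- Reverse a list and negate each entry. -/
def revneg (S : List ℤ) : List ℤ := (S.reverse).map (fun a => -a)

/-- The turning sequence `Tₙ` of the Peano-Gosper curve of order `n`. -/
def gosper : ℕ → List ℤ
  | 0 => []
  | 1 => [1, 2, -1, -2, 0, -1]
  | (n + 2) =>
      let g := gosper (n + 1)
      let r := revneg g
      g ++ [1] ++ r ++ [1] ++ r ++ [-1] ++ g ++ [-1] ++ g ++ [1] ++ g ++ [-1] ++ r

/-- The primitive sixth root of unity `ζ = e^{iπ/3}`. -/
noncomputable def ζ : ℂ := Complex.exp (Real.pi * Complex.I / 3)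

/-- The endpoint of the unit-step path with turning sequence `a`:
`E a = Σ_{j=0}^{m} ζ^{c_j}` where `c_j` is the `j`-th partial sum of `a`. -/
noncomputable def endpointG (a : List ℤ) : ℂ :=
  ((List.range (a.length + 1)).map (fun j => ζ ^ ((a.take j).sum))).sum

lemma zeta_ne : ζ ≠ 0 := Complex.exp_ne_zero _

lemma zeta_eq : ζ = (1 + Real.sqrt 3 * Complex.I) / 2 := by
  have h : (Real.pi * Complex.I / 3 : ℂ) = ((Real.pi / 3 : ℝ) : ℂ) * Complex.I := by
    push_cast; ring
  rw [ζ, h, Complex.exp_mul_I, ← Complex.ofReal_cos, ← Complex.ofReal_sin,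
    Real.cos_pi_div_three, Real.sin_pi_div_three]
  push_cast; ring

lemma zeta_sq : ζ ^ 2 = ζ - 1 := by
  have h3 : ((Real.sqrt 3 : ℝ) : ℂ) ^ 2 = 3 := by
    rw [← Complex.ofReal_pow, Real.sq_sqrt (by norm_num : (0:ℝ) ≤ 3)]; norm_num
  have hI : Complex.I ^ 2 = -1 := Complex.I_sq
  rw [zeta_eq]
  linear_combination (Complex.I ^ 2 / 4) * h3 + (3 / 4 : ℂ) * hI

lemma z1 : ζ ^ (1:ℤ) = ζ := zpow_one ζ
lemma z0 : ζ ^ (0:ℤ) = 1 := zpow_zero ζ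
lemma z2 : ζ ^ (2:ℤ) = ζ - 1 := by rw [show (2:ℤ) = ((2:ℕ):ℤ) by norm_num, zpow_natCast]; exact zeta_sq
lemma z3 : ζ ^ (3:ℤ) = -1 := by
  rw [show (3:ℤ) = 2 + 1 by norm_num, zpow_add₀ zeta_ne, z2, z1]
  linear_combination zeta_sq
lemma zm1 : ζ ^ (-1:ℤ) = 1 - ζ := by
  rw [zpow_neg, z1]
  rw [inv_eq_of_mul_eq_one_right (by linear_combination -zeta_sq : ζ * (1 - ζ) = 1)]
lemma zm2 : ζ ^ (-2:ℤ) = -ζ := by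
  rw [show (-2:ℤ) = -1 + -1 by norm_num, zpow_add₀ zeta_ne, zm1]
  linear_combination zeta_sq

lemma endpointG_nil : endpointG [] = 1 := by simp [endpointG]

lemma endpointG_cons (x : ℤ) (a : List ℤ) :
    endpointG (x :: a) = 1 + ζ ^ x * endpointG a := by
  unfold endpointG
  rw [List.length_cons, List.range_succ_eq_map]
  simp only [List.map_cons, List.map_map, List.sum_cons, List.take_zero, List.sum_nil,
    zpow_zero, Function.comp_def, List.take_succ_cons, List.sum_cons, zpow_add₀ zeta_ne,
    List.sum_map_mul_left]

lemma endpointG_append (a b : List ℤ) :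
    endpointG (a ++ b) = endpointG a + ζ ^ a.sum * (endpointG b - 1) := by
  induction a with
  | nil => simp [endpointG_nil]
  | cons x a ih =>
      simp only [List.cons_append, endpointG_cons, ih, List.sum_cons, zpow_add₀ zeta_ne]
      ring

lemma revneg_sum (S : List ℤ) : (revneg S).sum = -S.sum := by
  induction S with
  | nil => simp [revneg]
  | cons x S ih => simp [revneg] at ih ⊢; omega

lemma revneg_cons (x : ℤ) (S : List ℤ) : revneg (x :: S) = revneg S ++ [-x] := by
  simp [revneg]

lemma endpointG_revneg (S : List ℤ) :
    endpointG (revneg S) = ζ ^ (-S.sum) * endpointG S := by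
  induction S with
  | nil => simp [revneg, endpointG_nil]
  | cons x S ih =>
      rw [revneg_cons, endpointG_append, ih, revneg_sum, endpointG_cons (-x) [],
        endpointG_cons x S, endpointG_nil, List.sum_cons, neg_add,
        zpow_add₀ zeta_ne, zpow_neg ζ x, zpow_neg ζ S.sum]
      have h1 : ζ ^ x ≠ 0 := zpow_ne_zero x zeta_ne
      have h2 : ζ ^ S.sum ≠ 0 := zpow_ne_zero S.sum zeta_ne
      field_simp
      ring

lemma gosper_sum : ∀ n : ℕ, (gosper (n+1)).sum = -1
  | 0 => by simp [gosper]
  | (m+1) => by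
      show (gosper (m+2)).sum = -1
      rw [gosper]
      simp [List.sum_append, revneg_sum, gosper_sum m]

lemma endpointG_gosper : ∀ n : ℕ, endpointG (gosper (n+1)) = (2 + ζ) ^ (n+1)
  | 0 => by
      show endpointG [1, 2, -1, -2, 0, -1] = (2 + ζ) ^ 1
      simp only [endpointG_cons, endpointG_nil, z1, z2, zm1, zm2, z0]
      linear_combination (-ζ^3 + 4*ζ^2 - 3*ζ - 1) * zeta_sq
  | (m+1) => by
      show endpointG (gosper (m+2)) = (2 + ζ) ^ (m+2)
      rw [gosper]
      have hg : (gosper (m+1)).sum = -1 := gosper_sum m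
      have he : endpointG (gosper (m+1)) = (2 + ζ) ^ (m+1) := endpointG_gosper m
      have hr : endpointG (revneg (gosper (m+1))) = ζ * (2 + ζ) ^ (m+1) := by
        rw [endpointG_revneg, hg, he, neg_neg, z1]
      have hrs : (revneg (gosper (m+1))).sum = 1 := by rw [revneg_sum, hg]; ring
      simp only [endpointG_append, List.sum_append, endpointG_cons, endpointG_nil,
        List.sum_cons, List.sum_nil, hg, he, hr, hrs, Int.reduceAdd, Int.reduceNeg,
        add_zero, zero_add]
      simp only [z0, z1, z2, z3, zm1, zm2]
      linear_combination -zeta_sq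

lemma abs_two_add_zeta : ‖2 + ζ‖ = Real.sqrt 7 := by
  have h3 : (Real.sqrt 3) ^ 2 = 3 := Real.sq_sqrt (by norm_num)
  have hre : (2 + ζ).re = 5 / 2 := by rw [zeta_eq]; simp [Complex.div_re]; norm_num
  have him : (2 + ζ).im = Real.sqrt 3 / 2 := by rw [zeta_eq]; simp [Complex.div_im]
  rw [Complex.norm_def, Complex.normSq_apply, hre, him]
  congr 1
  nlinarith [h3]

theorem endpoint_gosper (n : ℕ) (hn : 1 ≤ n) :
    endpointG (gosper n) = (2 + ζ) ^ n ∧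
    ‖endpointG (gosper n)‖ = (Real.sqrt 7) ^ n := by
  obtain ⟨m, rfl⟩ : ∃ m, n = m + 1 := ⟨n - 1, (Nat.succ_pred_eq_of_pos hn).symm⟩
  refine ⟨endpointG_gosper m, ?_⟩
  rw [endpointG_gosper m, norm_pow, abs_two_add_zeta]
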